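/- Let D be a combinatorial link diagram with strand set S in which the two understrands of every crossing are distinct strands (D is not cut-split), suppose D is k-meridionally colorable via a sequence of coloring moves with final coloring f : S → {1,…,k}, and let h be the height function of the associated coloring sequence. Let c be a crossing with understrands s_p, s_q and overstrand s_r, and suppose f(s_p) = f(s_q). Then either (a) h(s_r) > min{h(s_p), h(s_q)}, or (b) the color class f^{-1}(f(s_p)) equals the entire connected component U of S (under adjacency) containing s_p, and c is the unique crossing whose two understrands s′_p, s′_q both lie in U and whose overstrand s′_r satisfies h(s′_r) ≤ min{h(s′_p), h(s′_q)}. -/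

import Mathlib

/-- A combinatorial link diagram: `n` strands and `n` crossings; each crossing has an
(unordered, here recorded as ordered) pair of understrands and an overstrand; every
strand occurs as an understrand of exactly two crossings, counted with multiplicity. -/
structure LinkDiagram where
  n : ℕ
  Strand : Type
  Crossing : Type
  [strandFintype : Fintype Strand]
  [strandDecEq : DecidableEq Strand]
  [crossingFintype : Fintype Crossing]
  card_strand : Fintype.card Strand = n
  card_crossing : Fintype.card Crossing = n
  under1 : Crossing → Strand
  under2 : Crossing → Strand
  overStrand : Crossing → Strand
  under_twice : ∀ s : Strand,
    Nat.card {c : Crossing // under1 c = s} + Nat.card {c : Crossing // under2 c = s} = 2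

attribute [instance] LinkDiagram.strandFintype LinkDiagram.strandDecEq
  LinkDiagram.crossingFintype

namespace LinkDiagram

/-- Two strands are adjacent if they are the two understrands of a common crossing. -/
def Adj (D : LinkDiagram) (s t : D.Strand) : Prop :=
  ∃ c : D.Crossing, (D.under1 c = s ∧ D.under2 c = t) ∨ (D.under1 c = t ∧ D.under2 c = s)

/-- A subset `B` of the strands is connected if any two of its elements are joined by a
path of adjacent strands lying within `B`. -/
def ConnectedIn (D : LinkDiagram) (B : Set D.Strand) : Prop :=
  ∀ s ∈ B, ∀ t ∈ B,
    Relation.ReflTransGen (fun a b => a ∈ B ∧ b ∈ B ∧ D.Adj a b) s t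

/-- The connected component (under adjacency) of the strand `s`. -/
def component (D : LinkDiagram) (s : D.Strand) : Set D.Strand :=
  {t | Relation.ReflTransGen D.Adj s t}

/-- A witness that `D` is `k`-meridionally colorable: `k` distinct seed strands, partial
colorings `f i` at each stage `i = 0, …, n-k` (a strand not yet colored has value `none`),
where stage `0` colors the seed `j` with color `j` and nothing else, and each stage
`i → i+1` is a coloring move assigning a color to the single new strand `newStrand i`:
it is an understrand at a crossing whose other understrand and overstrand are already
colored, and it receives the color of the other understrand.  At the final stage
`n - k`, every strand is colored. -/
structure ColoringProcess (D : LinkDiagram) (k : ℕ) where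
  seed : Fin k → D.Strand
  seed_inj : Function.Injective seed
  f : ℕ → D.Strand → Option (Fin k)
  newStrand : ℕ → D.Strand
  f0_seed : ∀ j : Fin k, f 0 (seed j) = some j
  f0_none : ∀ s : D.Strand, (∀ j : Fin k, seed j ≠ s) → f 0 s = none
  move_none : ∀ i < D.n - k, f i (newStrand i) = none
  move_eq : ∀ i < D.n - k, ∀ s : D.Strand, s ≠ newStrand i → f (i + 1) s = f i s
  move_adj : ∀ i < D.n - k, ∃ c : D.Crossing, ∃ si : D.Strand,
      ((D.under1 c = newStrand i ∧ D.under2 c = si) ∨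
        (D.under1 c = si ∧ D.under2 c = newStrand i)) ∧
      (f i si).isSome ∧ (f i (D.overStrand c)).isSome ∧
      f (i + 1) (newStrand i) = f i si
  final : ∀ s : D.Strand, (f (D.n - k) s).isSome

/-- The final coloring of a coloring process. -/
def ColoringProcess.final' {D : LinkDiagram} {k : ℕ} (p : ColoringProcess D k) :
    D.Strand → Option (Fin k) :=
  p.f (D.n - k)

/-- `h` is the height function of the coloring sequence associated to the process `p`:
the `j`-th seed (j = 1, …, k) has height `-j`, and the strand colored by the `i`-th
coloring move has height `-(k + i)`. -/
def IsHeightFunction {D : LinkDiagram} {k : ℕ} (p : ColoringProcess D k)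
    (h : D.Strand → ℤ) : Prop :=
  (∀ j : Fin k, h (p.seed j) = -((j : ℕ) + 1 : ℤ)) ∧
  (∀ i < D.n - k, h (p.newStrand i) = -((k : ℤ) + (i : ℕ) + 1))

end LinkDiagram

namespace LinkDiagram
namespace ColoringProcess

variable {D : LinkDiagram} {k : ℕ} (p : D.ColoringProcess k)

lemma step_eq {i : ℕ} (hi : i < D.n - k) {s : D.Strand} (hs : (p.f i s).isSome) :
    p.f (i + 1) s = p.f i s := by
  by_cases h : s = p.newStrand i
  · subst h; rw [p.move_none i hi] at hs; simp at hs
  · exact p.move_eq i hi s h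

lemma mono {i i' : ℕ} (hii : i ≤ i') (hi' : i' ≤ D.n - k) {s : D.Strand}
    (hs : (p.f i s).isSome) : p.f i' s = p.f i s := by
  induction i', hii using Nat.le_induction with
  | base => rfl
  | succ m hm ih =>
    have hmn : m < D.n - k := Nat.lt_of_succ_le hi'
    have h1 := ih (le_of_lt hmn)
    rw [p.step_eq hmn (by rw [h1]; exact hs), h1]

lemma seed_at (j : Fin k) {i : ℕ} (hi : i ≤ D.n - k) : p.f i (p.seed j) = some j := by
  rw [p.mono (Nat.zero_le i) hi (by simp [p.f0_seed j]), p.f0_seed j]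

lemma new_some {i : ℕ} (hi : i < D.n - k) : (p.f (i + 1) (p.newStrand i)).isSome := by
  obtain ⟨cc, si, _, h2, _, h4⟩ := p.move_adj i hi
  rw [h4]; exact h2

lemma isSome_new_iff {i i' : ℕ} (hi : i ≤ D.n - k) (hi' : i' < D.n - k) :
    (p.f i (p.newStrand i')).isSome ↔ i' < i := by
  constructor
  · intro hs
    by_contra hle
    push_neg at hle
    have h1 := p.mono hle (le_of_lt hi') hs
    rw [p.move_none i' hi'] at h1
    rw [← h1] at hs; simp at hs
  · intro hlt
    rw [p.mono (Nat.succ_le_of_lt hlt) hi (p.new_some hi')]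
    exact p.new_some hi'

lemma cases_of_some {i : ℕ} (hi : i ≤ D.n - k) {s : D.Strand} (hs : (p.f i s).isSome) :
    (∃ j, p.seed j = s) ∨ ∃ i' < i, i' < D.n - k ∧ p.newStrand i' = s := by
  induction i with
  | zero =>
    left
    by_contra hno
    push_neg at hno
    rw [p.f0_none s hno] at hs; simp at hs
  | succ m ih =>
    have hmn : m < D.n - k := Nat.lt_of_succ_le hi
    by_cases hnew : s = p.newStrand m
    · exact Or.inr ⟨m, Nat.lt_succ_self m, hmn, hnew.symm⟩
    · rw [p.move_eq m hmn s hnew] at hs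
      rcases ih (le_of_lt hmn) hs with h | ⟨i', h1, h2, h3⟩
      · exact Or.inl h
      · exact Or.inr ⟨i', lt_trans h1 (Nat.lt_succ_self m), h2, h3⟩

lemma strand_cases (s : D.Strand) :
    (∃ j, p.seed j = s) ∨ ∃ i < D.n - k, p.newStrand i = s := by
  rcases p.cases_of_some le_rfl (p.final s) with h | ⟨i', h1, h2, h3⟩
  · exact Or.inl h
  · exact Or.inr ⟨i', h2, h3⟩

lemma seed_ne_new {j : Fin k} {i : ℕ} (hi : i < D.n - k) :
    p.seed j ≠ p.newStrand i := by
  intro he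
  have h1 := p.seed_at j (le_of_lt hi)
  rw [he, p.move_none i hi] at h1
  simp at h1

lemma final'_eq {i : ℕ} (hi : i ≤ D.n - k) {s : D.Strand} (hs : (p.f i s).isSome) :
    p.final' s = p.f i s :=
  p.mono hi le_rfl hs

lemma seed_final (j : Fin k) : p.final' (p.seed j) = some j :=
  p.seed_at j le_rfl

lemma height_lt {h : D.Strand → ℤ} (hh : IsHeightFunction p h) {i : ℕ}
    (hi : i < D.n - k) {s : D.Strand} (hs : (p.f i s).isSome) :
    h (p.newStrand i) < h s := by
  rw [hh.2 i hi]
  rcases p.cases_of_some (le_of_lt hi) hs with ⟨j, rfl⟩ | ⟨i', hi'i, hi'n, rfl⟩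
  · rw [hh.1 j]
    have hj : (j : ℕ) < k := j.isLt
    omega
  · rw [hh.2 i' hi'n]
    omega

lemma color_component {i : ℕ} (hi : i ≤ D.n - k) :
    ∀ {s : D.Strand} {j : Fin k}, p.f i s = some j →
      Relation.ReflTransGen D.Adj (p.seed j) s := by
  induction i with
  | zero =>
    intro s j hs
    rcases p.cases_of_some (Nat.zero_le _) (Option.isSome_iff_exists.2 ⟨j, hs⟩) with ⟨j', rfl⟩ | ⟨i', h1, _, _⟩
    · rw [p.f0_seed j'] at hs
      have : j' = j := by simpa using hs
      subst this; exact Relation.ReflTransGen.refl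
    · omega
  | succ m ih =>
    intro s j hs
    have hmn : m < D.n - k := Nat.lt_of_succ_le hi
    by_cases hnew : s = p.newStrand m
    · subst hnew
      obtain ⟨cc, si, hu, hsi, _, heq⟩ := p.move_adj m hmn
      rw [heq] at hs
      refine (ih (le_of_lt hmn) hs).tail ?_
      rcases hu with ⟨h1, h2⟩ | ⟨h1, h2⟩
      · exact ⟨cc, Or.inr ⟨h1, h2⟩⟩
      · exact ⟨cc, Or.inl ⟨h1, h2⟩⟩
    · rw [p.move_eq m hmn s hnew] at hs
      exact ih (le_of_lt hmn) hs

lemma final_color_component {s : D.Strand} {j : Fin k} (hs : p.final' s = some j) :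
    Relation.ReflTransGen D.Adj (p.seed j) s :=
  p.color_component le_rfl hs

end ColoringProcess

lemma adj_symm {D : LinkDiagram} : Symmetric D.Adj := by
  rintro a b ⟨c, h | h⟩
  · exact ⟨c, Or.inr h⟩
  · exact ⟨c, Or.inl h⟩

lemma component_closed {D : LinkDiagram} {s t t' : D.Strand}
    (ht : t ∈ D.component s) (ha : D.Adj t t') : t' ∈ D.component s :=
  Relation.ReflTransGen.tail ht ha

end LinkDiagram

/-- Let `D` be a link diagram with distinct understrands at every
crossing (i.e. not cut-split), `k`-meridionally colorable, with final coloring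
`p.final'` and height function `h`.  If the two understrands of a crossing `c` get
the same final color, then either (a) the overstrand's height exceeds the minimum of
the understrands' heights, or (b) the color class of the understrands equals the whole
connected component `U` containing them, and `c` is the unique crossing with both
understrands in `U` whose overstrand's height is at most the minimum of its
understrands' heights. -/
theorem wirtinger_link_overstrand_height (D : LinkDiagram)
    (hdist : ∀ c : D.Crossing, D.under1 c ≠ D.under2 c)
    (k : ℕ) (p : LinkDiagram.ColoringProcess D k)
    (h : D.Strand → ℤ) (hh : LinkDiagram.IsHeightFunction p h)
    (c : D.Crossing)
    (hcol : p.final' (D.under1 c) = p.final' (D.under2 c)) :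
    min (h (D.under1 c)) (h (D.under2 c)) < h (D.overStrand c) ∨
    ({s : D.Strand | p.final' s = p.final' (D.under1 c)} = D.component (D.under1 c) ∧
      ∀ c' : D.Crossing,
        D.under1 c' ∈ D.component (D.under1 c) →
        D.under2 c' ∈ D.component (D.under1 c) →
        h (D.overStrand c') ≤ min (h (D.under1 c')) (h (D.under2 c')) →
        c' = c) := by
  classical
  by_cases ha : min (h (D.under1 c)) (h (D.under2 c)) < h (D.overStrand c)
  · exact Or.inl ha
  push_neg at ha
  right
  -- choose a witness crossing for each move
  have hex : ∀ i : ℕ, ∃ (cc : D.Crossing) (si : D.Strand),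
      i < D.n - k →
      ((D.under1 cc = p.newStrand i ∧ D.under2 cc = si) ∨
        (D.under1 cc = si ∧ D.under2 cc = p.newStrand i)) ∧
      (p.f i si).isSome ∧ (p.f i (D.overStrand cc)).isSome ∧
      p.f (i + 1) (p.newStrand i) = p.f i si := by
    intro i
    by_cases hi : i < D.n - k
    · obtain ⟨cc, si, h1, h2, h3, h4⟩ := p.move_adj i hi
      exact ⟨cc, si, fun _ => ⟨h1, h2, h3, h4⟩⟩
    · exact ⟨c, D.under1 c, fun hcon => absurd hcon hi⟩
  choose cw sw hw using hex
  -- (E1) every used crossing has overstrand height above the min of its understrands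
  have E1 : ∀ i, i < D.n - k →
      min (h (D.under1 (cw i))) (h (D.under2 (cw i))) < h (D.overStrand (cw i)) := by
    intro i hi
    obtain ⟨h1, h2, h3, _⟩ := hw i hi
    have hov := p.height_lt hh hi h3
    have hsw := p.height_lt hh hi h2
    rcases h1 with ⟨e1, e2⟩ | ⟨e1, e2⟩ <;> rw [e1, e2] <;> omega
  -- c itself is unused
  have hc_unused : ∀ i, i < D.n - k → cw i ≠ c := by
    intro i hi he
    have := E1 i hi
    rw [he] at this
    exact absurd this (not_lt.2 ha)
  -- injectivity of newStrand
  have new_inj : ∀ i i', i < D.n - k → i' < D.n - k →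
      p.newStrand i = p.newStrand i' → i = i' := by
    intro i i' hi hi' he
    by_contra hne
    rcases Nat.lt_or_ge i i' with hlt | hge
    · have h1 : (p.f i' (p.newStrand i)).isSome :=
        (p.isSome_new_iff (le_of_lt hi') hi).2 hlt
      rw [he, p.move_none i' hi'] at h1; simp at h1
    · have hlt : i' < i := lt_of_le_of_ne hge (Ne.symm hne)
      have h1 : (p.f i (p.newStrand i')).isSome :=
        (p.isSome_new_iff (le_of_lt hi) hi').2 hlt
      rw [← he, p.move_none i hi] at h1; simp at h1
  -- injectivity of the chosen crossings
  have E2' : ∀ i i', i < i' → i' < D.n - k → cw i ≠ cw i' := by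
    intro i i' hii hi' he
    have hi : i < D.n - k := lt_trans hii hi'
    obtain ⟨h1, h2, _, _⟩ := hw i hi
    obtain ⟨h1', _, _, _⟩ := hw i' hi'
    have hnone := p.move_none i' hi'
    have hsome1 : (p.f i' (p.newStrand i)).isSome :=
      (p.isSome_new_iff (le_of_lt hi') hi).2 hii
    have hsome2 : (p.f i' (sw i)).isSome := by
      rw [p.mono (le_of_lt hii) (le_of_lt hi') h2]; exact h2
    have key : p.newStrand i' = p.newStrand i ∨ p.newStrand i' = sw i := by
      rw [he] at h1
      rcases h1' with ⟨e1, _⟩ | ⟨_, e2⟩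
      · rcases h1 with ⟨f1, _⟩ | ⟨f1, _⟩
        · exact Or.inl (by rw [← e1, f1])
        · exact Or.inr (by rw [← e1, f1])
      · rcases h1 with ⟨_, f2⟩ | ⟨_, f2⟩
        · exact Or.inr (by rw [← e2, f2])
        · exact Or.inl (by rw [← e2, f2])
    rcases key with hkey | hkey <;> rw [hkey] at hnone
    · rw [hnone] at hsome1; simp at hsome1
    · rw [hnone] at hsome2; simp at hsome2
  have E2 : ∀ i i', i < D.n - k → i' < D.n - k → cw i = cw i' → i = i' := by
    intro i i' hi hi' he
    rcases Nat.lt_trichotomy i i' with hl | hl | hl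
    · exact absurd he (E2' i i' hl hi')
    · exact hl
    · exact absurd he.symm (E2' i' i hl hi)
  -- the color class inside the component, as a Finset
  set τ := p.final' (D.under1 c) with hτ
  set Cs : Finset D.Strand := Finset.univ.filter
    (fun t => p.final' t = τ ∧ t ∈ D.component (D.under1 c)) with hCs
  have memCs : ∀ t : D.Strand,
      t ∈ Cs ↔ p.final' t = τ ∧ t ∈ D.component (D.under1 c) := by
    intro t; simp [hCs]
  have hu1 : D.under1 c ∈ Cs := (memCs _).2 ⟨rfl, Relation.ReflTransGen.refl⟩
  have hu2 : D.under2 c ∈ Cs := (memCs _).2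
    ⟨hcol.symm, Relation.ReflTransGen.refl.tail ⟨c, Or.inl ⟨rfl, rfl⟩⟩⟩
  -- the map from strands of Cs to crossings
  set ψ : D.Strand → D.Crossing := fun t =>
    if hn : ∃ i, i < D.n - k ∧ p.newStrand i = t then cw hn.choose else c with hψ
  have ψ_new : ∀ i, i < D.n - k → ψ (p.newStrand i) = cw i := by
    intro i hi
    have hn : ∃ i', i' < D.n - k ∧ p.newStrand i' = p.newStrand i := ⟨i, hi, rfl⟩
    rw [hψ]; simp only [dif_pos hn]
    congr 1
    exact new_inj _ _ hn.choose_spec.1 hi hn.choose_spec.2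
  have ψ_seed : ∀ j : Fin k, ψ (p.seed j) = c := by
    intro j
    rw [hψ]
    have hn : ¬ ∃ i, i < D.n - k ∧ p.newStrand i = p.seed j := by
      rintro ⟨i, hi, he⟩
      exact p.seed_ne_new hi he.symm
    simp only [dif_neg hn]
  -- ψ maps Cs into crossings with both understrands in Cs
  have hψB : ∀ t ∈ Cs, D.under1 (ψ t) ∈ Cs ∧ D.under2 (ψ t) ∈ Cs := by
    intro t ht
    rcases p.strand_cases t with ⟨j, rfl⟩ | ⟨i, hi, rfl⟩
    · rw [ψ_seed j]; exact ⟨hu1, hu2⟩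
    · rw [ψ_new i hi]
      obtain ⟨h1, h2, _, h4⟩ := hw i hi
      have hadj : D.Adj (p.newStrand i) (sw i) := by
        rcases h1 with ⟨e1, e2⟩ | ⟨e1, e2⟩
        · exact ⟨cw i, Or.inl ⟨e1, e2⟩⟩
        · exact ⟨cw i, Or.inr ⟨e1, e2⟩⟩
      have hswC : sw i ∈ Cs := by
        rw [memCs]
        constructor
        · have hf1 : p.final' (sw i) = p.f i (sw i) :=
            p.final'_eq (le_of_lt hi) h2
          have hf2 : p.final' (p.newStrand i) = p.f (i + 1) (p.newStrand i) :=
            p.final'_eq hi (by rw [h4]; exact h2)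
          have : p.final' (sw i) = p.final' (p.newStrand i) := by
            rw [hf1, hf2, h4]
          rw [this]
          exact ((memCs _).1 ht).1
        · exact Relation.ReflTransGen.tail ((memCs _).1 ht).2 hadj
      rcases h1 with ⟨e1, e2⟩ | ⟨e1, e2⟩ <;> rw [e1, e2]
      · exact ⟨ht, hswC⟩
      · exact ⟨hswC, ht⟩
  -- ψ is injective on Cs
  have hψinj : Set.InjOn ψ ↑Cs := by
    intro t ht t' ht' he
    rcases p.strand_cases t with ⟨j, rfl⟩ | ⟨i, hi, rfl⟩ <;>
      rcases p.strand_cases t' with ⟨j', rfl⟩ | ⟨i', hi', rfl⟩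
    · have e1 : p.final' (p.seed j) = τ := ((memCs _).1 ht).1
      have e2 : p.final' (p.seed j') = τ := ((memCs _).1 ht').1
      rw [p.seed_final] at e1 e2
      have : (j : Fin k) = j' := by
        have := e1.trans e2.symm
        simpa using this
      rw [this]
    · rw [ψ_seed j, ψ_new i' hi'] at he
      exact absurd he.symm (hc_unused i' hi')
    · rw [ψ_seed j', ψ_new i hi] at he
      exact absurd he (hc_unused i hi)
    · rw [ψ_new i hi, ψ_new i' hi'] at he
      rw [E2 i i' hi hi' he]
  -- counting
  set B : Finset D.Crossing := Finset.univ.filter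
    (fun cc => D.under1 cc ∈ Cs ∧ D.under2 cc ∈ Cs) with hB
  set A1 : Finset D.Crossing := Finset.univ.filter (fun cc => D.under1 cc ∈ Cs) with hA1
  set A2 : Finset D.Crossing := Finset.univ.filter (fun cc => D.under2 cc ∈ Cs) with hA2
  have himage : Cs.image ψ ⊆ B := by
    intro cc hcc
    obtain ⟨t, ht, rfl⟩ := Finset.mem_image.1 hcc
    rw [hB, Finset.mem_filter]
    exact ⟨Finset.mem_univ _, hψB t ht⟩
  have hcard_image : (Cs.image ψ).card = Cs.card := Finset.card_image_of_injOn hψinj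
  have hCsB : Cs.card ≤ B.card := by
    rw [← hcard_image]; exact Finset.card_le_card himage
  -- degree count: A1.card + A2.card = 2 * Cs.card
  have hfib1 : A1.card = ∑ t ∈ Cs, (Finset.univ.filter (fun cc => D.under1 cc = t)).card := by
    rw [Finset.card_eq_sum_card_fiberwise (f := D.under1) (s := A1) (t := Cs)
      (fun cc hcc => (Finset.mem_filter.1 hcc).2)]
    refine Finset.sum_congr rfl (fun b hb => ?_)
    congr 1
    ext cc
    simp only [hA1, Finset.mem_filter, Finset.mem_univ, true_and]
    constructor
    · rintro ⟨_, h2⟩; exact h2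
    · intro h2; exact ⟨h2 ▸ hb, h2⟩
  have hfib2 : A2.card = ∑ t ∈ Cs, (Finset.univ.filter (fun cc => D.under2 cc = t)).card := by
    rw [Finset.card_eq_sum_card_fiberwise (f := D.under2) (s := A2) (t := Cs)
      (fun cc hcc => (Finset.mem_filter.1 hcc).2)]
    refine Finset.sum_congr rfl (fun b hb => ?_)
    congr 1
    ext cc
    simp only [hA2, Finset.mem_filter, Finset.mem_univ, true_and]
    constructor
    · rintro ⟨_, h2⟩; exact h2
    · intro h2; exact ⟨h2 ▸ hb, h2⟩
  have hdeg : ∀ t : D.Strand,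
      (Finset.univ.filter (fun cc => D.under1 cc = t)).card
        + (Finset.univ.filter (fun cc => D.under2 cc = t)).card = 2 := by
    intro t
    have := D.under_twice t
    rw [Nat.card_eq_fintype_card, Nat.card_eq_fintype_card] at this
    rw [← this, Fintype.card_subtype, Fintype.card_subtype]
  have hsum : A1.card + A2.card = 2 * Cs.card := by
    rw [hfib1, hfib2, ← Finset.sum_add_distrib]
    rw [Finset.sum_congr rfl (fun t _ => hdeg t), Finset.sum_const, smul_eq_mul]
    exact Nat.mul_comm _ _

  have hinter : A1 ∩ A2 = B := by
    ext cc
    simp only [hA1, hA2, hB, Finset.mem_inter, Finset.mem_filter, Finset.mem_univ, true_and]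
  have hIU : B.card + (A1 ∪ A2).card = 2 * Cs.card := by
    rw [← hinter, Finset.card_inter_add_card_union, hsum]
  have hBU : B ⊆ A1 ∪ A2 := by
    rw [← hinter]; exact Finset.inter_subset_left.trans Finset.subset_union_left
  have hBcard : B.card ≤ (A1 ∪ A2).card := Finset.card_le_card hBU
  have hUcard : (A1 ∪ A2).card ≤ B.card := by omega
  have hUB : A1 ∪ A2 = B := (Finset.eq_of_subset_of_card_le hBU hUcard).symm
  have hBim : B = Cs.image ψ := by
    refine (Finset.eq_of_subset_of_card_le himage ?_).symm
    rw [hcard_image]; omega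
  -- Cs is closed under adjacency
  have hclosed : ∀ t ∈ Cs, ∀ t', D.Adj t t' → t' ∈ Cs := by
    rintro t ht t' ⟨cc, hcc⟩
    have hccU : cc ∈ A1 ∪ A2 := by
      rw [Finset.mem_union]
      rcases hcc with ⟨e1, _⟩ | ⟨_, e2⟩
      · left; rw [hA1, Finset.mem_filter]; exact ⟨Finset.mem_univ _, e1.symm ▸ ht⟩
      · right; rw [hA2, Finset.mem_filter]; exact ⟨Finset.mem_univ _, e2.symm ▸ ht⟩
    rw [hUB, hB, Finset.mem_filter] at hccU
    obtain ⟨_, hb1, hb2⟩ := hccU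
    rcases hcc with ⟨_, e2⟩ | ⟨e1, _⟩
    · exact e2 ▸ hb2
    · exact e1 ▸ hb1
  -- the whole component is contained in Cs
  have hcomp_sub : ∀ t, t ∈ D.component (D.under1 c) → t ∈ Cs := by
    intro t ht
    simp only [LinkDiagram.component, Set.mem_setOf_eq] at ht
    induction ht with
    | refl => exact hu1
    | tail _ hbc ih => exact hclosed _ ih _ hbc
  obtain ⟨j, hj⟩ := Option.isSome_iff_exists.1 (p.final (D.under1 c))
  have hjτ : τ = some j := hj
  -- part (b1)
  have hb1 : {s : D.Strand | p.final' s = τ} = D.component (D.under1 c) := by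
    ext t
    simp only [Set.mem_setOf_eq]
    constructor
    · intro ht
      have h1 : Relation.ReflTransGen D.Adj (p.seed j) t :=
        p.final_color_component (by rw [ht]; exact hjτ)
      have h2 : Relation.ReflTransGen D.Adj (p.seed j) (D.under1 c) :=
        p.final_color_component (by rw [← hτ]; exact hjτ)
      exact Relation.ReflTransGen.trans
        (by haveI : Std.Symm D.Adj := ⟨fun a b hab => LinkDiagram.adj_symm hab⟩; exact Std.Symm.symm _ _ h2) h1
    · intro ht
      exact ((memCs t).1 (hcomp_sub t ht)).1
  refine ⟨hb1, ?_⟩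
  -- part (b2)
  intro c' h1' h2' hle
  have hc'B : c' ∈ B := by
    rw [hB, Finset.mem_filter]
    exact ⟨Finset.mem_univ _, hcomp_sub _ h1', hcomp_sub _ h2'⟩
  rw [hBim] at hc'B
  obtain ⟨t, ht, hψt⟩ := Finset.mem_image.1 hc'B
  rcases p.strand_cases t with ⟨j', rfl⟩ | ⟨i, hi, rfl⟩
  · rw [ψ_seed j'] at hψt
    exact hψt.symm
  · rw [ψ_new i hi] at hψt
    have hE := E1 i hi
    rw [hψt] at hE
    exact absurd hle (not_le.2 hE)
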